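/- Let K be a field and Γ, Δ ∈ U^n(K). For each 1 ≤ i ≤ n let U_i ≤ K^{n+1} be the span of the first i rows of Φ(Γ) and W_i ≤ K^{n+1} the span of the first i rows of Φ(Δ). Then Σ_{i=1}^{n} d(U_i, W_i) = Σ_{i=1}^{n} rank(M_i), where M_i ∈ K^{i×(n+1−i)} is the submatrix of Φ(Γ)·Φ(Δ)^{−1} formed by rows 1, …, i and columns i+1, …, n+1, and d is the Grassmann distance. (Equivalently, the distance between the two full flags equals frk(Φ^{−1}(Φ(Γ)Φ(Δ)^{−1})).) -/

import Mathlib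

set_option maxHeartbeats 1000000
set_option synthInstance.maxHeartbeats 1000000


/-- The space `U^n(K)` of upper triangular `n × n` matrices over `K`,
as a `K`-subspace of the matrix space. -/
def UT (K : Type*) [Field K] (n : ℕ) : Submodule K (Matrix (Fin n) (Fin n) K) where
  carrier := {A | ∀ i j : Fin n, (j : ℕ) < (i : ℕ) → A i j = 0}
  add_mem' := by
    intro a b ha hb i j h
    simp [Matrix.add_apply, ha i j h, hb i j h]
  zero_mem' := by
    intro i j h
    simp
  smul_mem' := by
    intro c a ha i j h
    simp [Matrix.smul_apply, ha i j h]

/-- For `Δ ∈ U^n(K)` and `i : Fin n` (representing the 1-indexed value `i+1`),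
the upper-right corner submatrix `Δ_[i+1] ∈ K^{(i+1) × (n+1-(i+1))}`,
consisting of the entries `Δ_{k,ℓ}` with (1-indexed) `1 ≤ k ≤ i+1`, `i+1 ≤ ℓ ≤ n`. -/
def corner {K : Type*} [Field K] {n : ℕ} (Δ : Matrix (Fin n) (Fin n) K) (i : Fin n) :
    Matrix (Fin ((i : ℕ) + 1)) (Fin (n + 1 - ((i : ℕ) + 1))) K :=
  Matrix.of fun k l =>
    Δ ⟨k, by have := k.isLt; have := i.isLt; omega⟩
      ⟨(i : ℕ) + l, by have := l.isLt; have := i.isLt; omega⟩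

/-- The flag rank of an upper triangular matrix: the sum of the ranks of its
upper-right corner submatrices, `frk Δ = Σ_{i=1}^{n} rank Δ_[i]`. -/
noncomputable def frk {K : Type*} [Field K] {n : ℕ} (Δ : Matrix (Fin n) (Fin n) K) : ℕ :=
  ∑ i : Fin n, (corner Δ i).rank

/-- The unitriangular `(n+1) × (n+1)` matrix `Φ(Δ)` attached to `Δ ∈ U^n(K)`:
`Φ(Δ)_{i,i} = 1`, `Φ(Δ)_{i,j+1} = Δ_{i,j}` for `1 ≤ i ≤ j ≤ n` (1-indexed), and all
other entries `0`. -/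
def Phi {K : Type*} [Field K] {n : ℕ} (Δ : Matrix (Fin n) (Fin n) K) :
    Matrix (Fin (n + 1)) (Fin (n + 1)) K :=
  Matrix.of fun r c =>
    if (r : ℕ) = (c : ℕ) then 1
    else if h : (r : ℕ) < (c : ℕ) then
      Δ ⟨r, by have := c.isLt; omega⟩ ⟨(c : ℕ) - 1, by have := c.isLt; omega⟩
    else 0

open Module

section Aux
open Matrix Submodule

set_option synthInstance.maxHeartbeats 1000000
set_option maxHeartbeats 1000000

lemma ker_funLeft_eq {K : Type*} [Field K] {n m : ℕ} (hm : m < n) :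
    LinearMap.ker (LinearMap.funLeft K K
        (fun c : Fin (n - m) => (⟨m + 1 + c, by have := c.isLt; omega⟩ : Fin (n + 1)))) =
      span K (Set.range fun k : Fin (m + 1) =>
        (1 : Matrix (Fin (n+1)) (Fin (n+1)) K) ⟨k, by have := k.isLt; omega⟩) := by
  ext v
  simp only [LinearMap.mem_ker]
  constructor
  · intro hv
    have hv' : ∀ j : Fin (n + 1), m + 1 ≤ (j : ℕ) → v j = 0 := by
      intro j hj
      have hj2 : (j : ℕ) - (m + 1) < n - m := by have := j.isLt; omega
      have h3 := congrFun hv ⟨(j : ℕ) - (m + 1), hj2⟩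
      have hje : (⟨m + 1 + ((j : ℕ) - (m + 1)), by have := j.isLt; omega⟩ : Fin (n+1)) = j :=
        Fin.ext (by simp; omega)
      simpa only [LinearMap.funLeft_apply, Pi.zero_apply, hje] using h3
    have hveq : v = ∑ k : Fin (m + 1),
        v ⟨k, by have := k.isLt; omega⟩ • (1 : Matrix (Fin (n+1)) (Fin (n+1)) K) ⟨k, by have := k.isLt; omega⟩ := by
      funext c
      simp only [Finset.sum_apply, Pi.smul_apply, Matrix.one_apply, smul_eq_mul,
        mul_ite, mul_one, mul_zero]
      by_cases hc : (c : ℕ) ≤ m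
      · rw [Finset.sum_eq_single (⟨(c : ℕ), by omega⟩ : Fin (m + 1))]
        · rw [if_pos (Fin.ext (by simp))]
        · intro k _ hk
          rw [if_neg]
          intro h
          exact hk (Fin.ext (by simpa using congrArg Fin.val h))
        · intro h; exact absurd (Finset.mem_univ _) h
      · rw [hv' c (by omega), Finset.sum_eq_zero]
        intro k _
        rw [if_neg]
        intro h
        have := congrArg Fin.val h
        simp at this
        omega
    rw [hveq]
    exact Submodule.sum_mem _ fun k _ => Submodule.smul_mem _ _ (subset_span ⟨k, rfl⟩)
  · intro hv
    refine LinearMap.mem_ker.1 (Submodule.span_le.mpr ?_ hv)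
    rintro w ⟨k, rfl⟩
    simp only [SetLike.mem_coe, LinearMap.mem_ker]
    funext c
    simp only [LinearMap.funLeft_apply, Pi.zero_apply, Matrix.one_apply]
    rw [if_neg]
    intro h
    have := congrArg Fin.val h
    simp at this
    omega

lemma aux_per_i {K : Type*} [Field K] {n m : ℕ} (hm : m < n)
    (C : Matrix (Fin (n+1)) (Fin (n+1)) K) (hC : IsUnit C)
    (M : Matrix (Fin (m+1)) (Fin (n-m)) K)
    (hM : ∀ (r : Fin (m+1)) (c : Fin (n-m)),
      M r c = C ⟨r, by have := r.isLt; omega⟩ ⟨m+1+c, by have := c.isLt; omega⟩) :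
    finrank K ↥(span K (Set.range fun k : Fin (m+1) => C ⟨k, by have := k.isLt; omega⟩) ⊔
        span K (Set.range fun k : Fin (m+1) =>
          (1 : Matrix (Fin (n+1)) (Fin (n+1)) K) ⟨k, by have := k.isLt; omega⟩)) -
      finrank K ↥(span K (Set.range fun k : Fin (m+1) => C ⟨k, by have := k.isLt; omega⟩) ⊓
        span K (Set.range fun k : Fin (m+1) =>
          (1 : Matrix (Fin (n+1)) (Fin (n+1)) K) ⟨k, by have := k.isLt; omega⟩)) = 2 * M.rank := by
  set emb : Fin (m+1) → Fin (n+1) := fun k => ⟨k, by have := k.isLt; omega⟩ with hemb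
  have hembinj : Function.Injective emb := fun a b h => Fin.ext (by simpa [hemb] using congrArg Fin.val h)
  set P : Submodule K (Fin (n+1) → K) := span K (Set.range fun k : Fin (m+1) => C (emb k)) with hPdef
  set Q : Submodule K (Fin (n+1) → K) := span K (Set.range fun k : Fin (m+1) =>
    (1 : Matrix (Fin (n+1)) (Fin (n+1)) K) (emb k)) with hQdef
  have hP : finrank K ↥P = m + 1 := by
    have h1 := finrank_span_eq_card
      (((Matrix.linearIndependent_rows_iff_isUnit (K := K)).2 hC).comp emb hembinj)
    rw [hPdef]
    rw [Fintype.card_fin] at h1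
    exact h1
  have hQ : finrank K ↥Q = m + 1 := by
    have h1 := finrank_span_eq_card
      (((Matrix.linearIndependent_rows_iff_isUnit (K := K)).2 isUnit_one).comp emb hembinj)
    rw [hQdef]
    rw [Fintype.card_fin] at h1
    exact h1
  set π : (Fin (n+1) → K) →ₗ[K] (Fin (n-m) → K) := LinearMap.funLeft K K
    (fun c : Fin (n - m) => (⟨m + 1 + c, by have := c.isLt; omega⟩ : Fin (n + 1))) with hπ
  have hker : LinearMap.ker π = Q := ker_funLeft_eq hm
  set S := P ⊔ Q with hS
  have hrn := LinearMap.finrank_range_add_finrank_ker (π.comp S.subtype)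
  have hrange : LinearMap.range (π.comp S.subtype) = Submodule.map π P := by
    rw [LinearMap.range_comp, Submodule.range_subtype, hS, Submodule.map_sup]
    have : Submodule.map π Q = ⊥ := by
      rw [← hker]
      exact (Submodule.map_le_iff_le_comap.2 (fun x hx => by
        simpa using (LinearMap.mem_ker.1 hx))).antisymm bot_le
    rw [this, sup_bot_eq]
  have hmapP : finrank K ↥(Submodule.map π P) = M.rank := by
    rw [hPdef, Submodule.map_span, ← Set.range_comp]
    have heq : (π ∘ fun k : Fin (m+1) => C (emb k)) = fun k => M k := by
      funext k c
      simp only [Function.comp_apply, hπ, LinearMap.funLeft_apply]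
      exact (hM k c).symm
    rw [heq, M.rank_eq_finrank_span_row]
    rfl
  have hkerc : LinearMap.ker (π.comp S.subtype) = Submodule.comap S.subtype Q := by
    rw [LinearMap.ker_comp, hker]
  have hQS : Q ≤ S := le_sup_right
  have hkerfr : finrank K ↥(LinearMap.ker (π.comp S.subtype)) = m + 1 := by
    rw [hkerc, (Submodule.comapSubtypeEquivOfLe hQS).finrank_eq, hQ]
  have hsup : finrank K ↥S = M.rank + (m + 1) := by
    rw [← hrn, hrange, hmapP, hkerfr]
  have hsi := Submodule.finrank_sup_add_finrank_inf_eq P Q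
  rw [hP, hQ] at hsi
  rw [hsup] at hsi ⊢
  omega

lemma Phi_det_one {K : Type*} [Field K] {n : ℕ} (Δ : Matrix (Fin n) (Fin n) K) :
    (Phi Δ).det = 1 := by
  rw [Matrix.det_of_upperTriangular (by
    intro r c h
    have h' : (c : ℕ) < (r : ℕ) := h
    simp only [Phi, Matrix.of_apply]
    rw [if_neg (by omega), dif_neg (by omega)])]
  have : ∀ r : Fin (n+1), Phi Δ r r = 1 := by intro r; simp [Phi]
  simp [this]

lemma set_row_eq {K : Type*} [Field K] {n : ℕ} (A : Matrix (Fin (n+1)) (Fin (n+1)) K)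
    (m : ℕ) (hm : m < n) :
    {v | ∃ r : Fin (n + 1), (r : ℕ) ≤ m ∧ v = A r} =
      Set.range fun k : Fin (m+1) => A ⟨k, by have := k.isLt; omega⟩ := by
  ext v
  constructor
  · rintro ⟨r, hr, rfl⟩
    refine ⟨⟨(r : ℕ), by omega⟩, ?_⟩
    congr 1
  · rintro ⟨k, rfl⟩
    exact ⟨⟨(k : ℕ), by have := k.isLt; omega⟩, by simpa using Nat.lt_succ_iff.mp k.isLt, rfl⟩

end Aux

open Matrix Submodule

/-- For `Γ, Δ ∈ U^n(K)`, let `U_i` (resp. `W_i`) be the span of the first `i` rows of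
`Φ(Γ)` (resp. `Φ(Δ)`), and let `M_i ∈ K^{i×(n+1-i)}` be the submatrix of
`Φ(Γ) · Φ(Δ)⁻¹` formed by rows `1, …, i` and columns `i+1, …, n+1` (1-indexed).
Then `Σ_{i=1}^{n} d(U_i, W_i) = Σ_{i=1}^{n} rank M_i`, where `d` is the Grassmann
distance `d(U,W) = (dim(U+W) - dim(U∩W))/2`; the statement is expressed with both
sides multiplied by `2`. -/
theorem sum_grassmann_distance_flags_eq_sum_rank {K : Type*} [Field K] {n : ℕ}
    (Γ Δ : Matrix (Fin n) (Fin n) K) (hΓ : Γ ∈ UT K n) (hΔ : Δ ∈ UT K n)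
    (U W : Fin n → Submodule K (Fin (n + 1) → K))
    (hU : ∀ i : Fin n, U i =
      Submodule.span K {v | ∃ r : Fin (n + 1), (r : ℕ) ≤ (i : ℕ) ∧ v = Phi Γ r})
    (hW : ∀ i : Fin n, W i =
      Submodule.span K {v | ∃ r : Fin (n + 1), (r : ℕ) ≤ (i : ℕ) ∧ v = Phi Δ r})
    (M : (i : Fin n) → Matrix (Fin ((i : ℕ) + 1)) (Fin (n - (i : ℕ))) K)
    (hM : ∀ (i : Fin n) (r : Fin ((i : ℕ) + 1)) (c : Fin (n - (i : ℕ))),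
      M i r c = (Phi Γ * (Phi Δ)⁻¹)
        ⟨r, by have := r.isLt; have := i.isLt; omega⟩
        ⟨(i : ℕ) + 1 + c, by have := c.isLt; have := i.isLt; omega⟩) :
    ∑ i : Fin n, (finrank K ↥(U i ⊔ W i) - finrank K ↥(U i ⊓ W i)) =
      2 * ∑ i : Fin n, (M i).rank := by
  classical
  have hA : IsUnit (Phi Γ) := (Matrix.isUnit_iff_isUnit_det _).2
    (by rw [Phi_det_one]; exact isUnit_one)
  have hB : IsUnit (Phi Δ) := (Matrix.isUnit_iff_isUnit_det _).2
    (by rw [Phi_det_one]; exact isUnit_one)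
  have hBinv : IsUnit (Phi Δ)⁻¹ := Matrix.isUnit_nonsing_inv_iff.2 hB
  have hCunit : IsUnit (Phi Γ * (Phi Δ)⁻¹) := hA.mul hBinv
  set f : (Fin (n+1) → K) →ₗ[K] (Fin (n+1) → K) := Matrix.vecMulLinear (Phi Δ)⁻¹ with hfdef
  have hfinj : Function.Injective f := by
    have h := Matrix.vecMul_injective_iff_isUnit.2 hBinv
    simpa [hfdef, Matrix.coe_vecMulLinear] using h
  have hfA : ∀ r : Fin (n+1), f (Phi Γ r) = (Phi Γ * (Phi Δ)⁻¹) r := by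
    intro r; funext c
    simp [hfdef, Matrix.vecMulLinear_apply, Matrix.mul_apply, Matrix.vecMul, dotProduct]
  have hfB : ∀ r : Fin (n+1), f (Phi Δ r) = (1 : Matrix (Fin (n+1)) (Fin (n+1)) K) r := by
    intro r
    have h1 : Phi Δ * (Phi Δ)⁻¹ = 1 :=
      Matrix.mul_nonsing_inv _ (by rw [Phi_det_one]; exact isUnit_one)
    funext c
    have h2 := congrFun (congrFun h1 r) c
    simpa [hfdef, Matrix.vecMulLinear_apply, Matrix.mul_apply, Matrix.vecMul,
      dotProduct] using h2
  rw [Finset.mul_sum]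
  refine Finset.sum_congr rfl fun i _ => ?_
  obtain ⟨m, hm⟩ := i
  have hc : ((⟨m, hm⟩ : Fin n) : ℕ) = m := rfl
  have e1 : finrank K ↥(U ⟨m, hm⟩ ⊔ W ⟨m, hm⟩) =
      finrank K ↥(Submodule.map f (U ⟨m, hm⟩) ⊔ Submodule.map f (W ⟨m, hm⟩)) := by
    rw [← Submodule.map_sup]
    exact (Submodule.equivMapOfInjective f hfinj _).finrank_eq
  have e2 : finrank K ↥(U ⟨m, hm⟩ ⊓ W ⟨m, hm⟩) =
      finrank K ↥(Submodule.map f (U ⟨m, hm⟩) ⊓ Submodule.map f (W ⟨m, hm⟩)) := by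
    rw [← Submodule.map_inf f hfinj]
    exact (Submodule.equivMapOfInjective f hfinj _).finrank_eq
  have hUmap : Submodule.map f (U ⟨m, hm⟩) =
      span K (Set.range fun k : Fin (m+1) =>
        (Phi Γ * (Phi Δ)⁻¹) ⟨k, by have := k.isLt; omega⟩) := by
    rw [hU ⟨m, hm⟩, show {v | ∃ r : Fin (n + 1), (r : ℕ) ≤ ((⟨m, hm⟩ : Fin n) : ℕ) ∧ v = Phi Γ r} = _ from set_row_eq (Phi Γ) m hm, Submodule.map_span, ← Set.range_comp]
    exact congrArg (span K) (congrArg Set.range (funext fun k => hfA _))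
  have hWmap : Submodule.map f (W ⟨m, hm⟩) =
      span K (Set.range fun k : Fin (m+1) =>
        (1 : Matrix (Fin (n+1)) (Fin (n+1)) K) ⟨k, by have := k.isLt; omega⟩) := by
    rw [hW ⟨m, hm⟩, show {v | ∃ r : Fin (n + 1), (r : ℕ) ≤ ((⟨m, hm⟩ : Fin n) : ℕ) ∧ v = Phi Δ r} = _ from set_row_eq (Phi Δ) m hm, Submodule.map_span, ← Set.range_comp]
    exact congrArg (span K) (congrArg Set.range (funext fun k => hfB _))
  rw [e1, e2, hUmap, hWmap]
  exact aux_per_i hm (Phi Γ * (Phi Δ)⁻¹) hCunit (M ⟨m, hm⟩) (fun r c => hM ⟨m, hm⟩ r c)
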